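/- The solution function built from the ultradiscrete theta function is periodic with period 9κ: fix κ > 0, define Ξ(u; α, β, γ, θ) := [Θ(u/α; θ) − Θ((u−β)/α; θ)] − [Θ((u−γ)/α; θ) − Θ((u−β−γ)/α; θ)] and Ω(u) := max( Ξ(u; 9κ, 6κ, 2κ, 9κ/2), Ξ(u−κ; 9κ, 3κ, 3κ, 9κ/2) ). Then for every u ∈ ℝ, Ω(u + 9κ) = Ω(u). -/
import Mathlib

/-- The ultradiscrete elliptic theta function
`Θ(u; θ) = −θ(u − 1/2)² + θ · sup_{n ∈ ℤ} (2nu − n − n²)`. -/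
noncomputable def uTheta (u θ : ℝ) : ℝ :=
  -θ * (u - 1 / 2) ^ 2 + θ * ⨆ n : ℤ, (2 * (n : ℝ) * u - (n : ℝ) - (n : ℝ) ^ 2)

/-- `Ξ(u; α, β, γ, θ) = [Θ(u/α) − Θ((u−β)/α)] − [Θ((u−γ)/α) − Θ((u−β−γ)/α)]`. -/
noncomputable def Xi (u α β γ θ : ℝ) : ℝ :=
  (uTheta (u / α) θ - uTheta ((u - β) / α) θ) -
    (uTheta ((u - γ) / α) θ - uTheta ((u - β - γ) / α) θ)

/-- The solution function
`Ω(u) = max( Ξ(u; 9κ, 6κ, 2κ, 9κ/2), Ξ(u−κ; 9κ, 3κ, 3κ, 9κ/2) )`. -/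
noncomputable def OmegaTheta (κ u : ℝ) : ℝ :=
  max (Xi u (9 * κ) (6 * κ) (2 * κ) (9 * κ / 2))
    (Xi (u - κ) (9 * κ) (3 * κ) (3 * κ) (9 * κ / 2))

private noncomputable def fθ (u : ℝ) (n : ℤ) : ℝ := 2 * (n : ℝ) * u - (n : ℝ) - (n : ℝ) ^ 2

lemma fθ_bdd (u : ℝ) : BddAbove (Set.range (fθ u)) := by
  refine ⟨(u - 1/2)^2, ?_⟩
  rintro x ⟨n, rfl⟩
  simp only [fθ]
  nlinarith [sq_nonneg (u - 1/2 - (n:ℝ))]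

lemma sup_shift (u : ℝ) : (⨆ n : ℤ, fθ (u + 1) n) = (⨆ n : ℤ, fθ u n) + 2 * u := by
  have h1 : (fun n : ℤ => fθ (u + 1) n) = fun n : ℤ => fθ u (n - 1) + 2 * u := by
    funext n; simp only [fθ]; push_cast; ring
  have hr : Set.range (fun n : ℤ => fθ u (n - 1)) = Set.range (fθ u) := by
    ext x
    constructor
    · rintro ⟨n, rfl⟩; exact ⟨n - 1, rfl⟩
    · rintro ⟨n, rfl⟩; exact ⟨n + 1, by simp⟩
  have h2 : (⨆ n : ℤ, fθ u (n - 1)) = ⨆ n : ℤ, fθ u n := by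
    show sSup _ = sSup _
    rw [hr]
  rw [h1, ← h2]
  rw [← ciSup_add (by rw [hr]; exact fθ_bdd u) (2 * u)]

lemma uTheta_shift (u θ : ℝ) : uTheta (u + 1) θ = uTheta u θ := by
  have := sup_shift u
  simp only [fθ] at this
  simp only [uTheta, this]
  ring

lemma uTheta_shift' (u θ : ℝ) : uTheta (1 + u) θ = uTheta u θ := by
  rw [add_comm]; exact uTheta_shift u θ

lemma Xi_shift (u α β γ θ : ℝ) (hα : α ≠ 0) : Xi (u + α) α β γ θ = Xi u α β γ θ := by
  have key : ∀ v : ℝ, (v + α) / α = v / α + 1 := fun v => by field_simp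
  simp only [Xi]
  rw [show u + α - β - γ = (u - β - γ) + α by ring, show u + α - β = (u - β) + α by ring,
    show u + α - γ = (u - γ) + α by ring, key, key, key, key,
    uTheta_shift, uTheta_shift, uTheta_shift, uTheta_shift]

/-- The solution function built from the ultradiscrete theta function is
periodic with period `9κ`. -/
theorem OmegaTheta_periodic (κ : ℝ) (hκ : 0 < κ) (u : ℝ) :
    OmegaTheta κ (u + 9 * κ) = OmegaTheta κ u := by
  have h9 : (9 : ℝ) * κ ≠ 0 := by positivity
  simp only [OmegaTheta]
  rw [show u + 9 * κ - κ = (u - κ) + 9 * κ by ring, Xi_shift _ _ _ _ _ h9, Xi_shift _ _ _ _ _ h9]
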